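/- Let φ be a refinement-stable and non-contradictory consensus method for profiles of k hierarchies on X. Then for every profile P = (H_1, …, H_k) and every cluster c ∈ φ(P), there is at least one index i with c ∈ H_i; that is, every cluster of the output is already present in some input tree. -/

import Mathlib

/-- Two clusters (nonempty subsets of the taxon set) are compatible if one
contains the other or they are disjoint. -/
def Compatible {X : Type*} (c₁ c₂ : Set X) : Prop :=
  c₁ ⊆ c₂ ∨ c₂ ⊆ c₁ ∨ c₁ ∩ c₂ = ∅

/-- A hierarchy on `X`: a family of pairwise compatible nonempty clusters
containing `X` itself and all singletons (the cluster encoding of a rooted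
phylogenetic `X`-tree). -/
def IsHierarchy {X : Type*} (H : Set (Set X)) : Prop :=
  (∀ c ∈ H, c.Nonempty) ∧
  (∀ c₁ ∈ H, ∀ c₂ ∈ H, Compatible c₁ c₂) ∧
  Set.univ ∈ H ∧
  ∀ x : X, {x} ∈ H


lemma compatible_symm {X : Type*} {c d : Set X} (h : Compatible c d) : Compatible d c := by
  rcases h with h | h | h
  · exact Or.inr (Or.inl h)
  · exact Or.inl h
  · exact Or.inr (Or.inr (by rw [Set.inter_comm]; exact h))

lemma key_refine {X : Type*} [Fintype X] {H : Set (Set X)} (hH : IsHierarchy H)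
    {c : Set X} (hc : c.Nonempty) (hcH : c ∉ H) :
    ∃ H', IsHierarchy H' ∧ H ⊆ H' ∧ ∃ d ∈ H', ¬ Compatible c d := by
  by_cases hcomp : ∀ e ∈ H, Compatible c e
  swap
  · push_neg at hcomp
    obtain ⟨e, he, hnce⟩ := hcomp
    exact ⟨H, hH, subset_rfl, e, he, hnce⟩
  obtain ⟨hne, hpc, huniv, hsingle⟩ := hH
  have hcu : c ≠ Set.univ := fun h => hcH (h ▸ huniv)
  -- minimal m ∈ H with c ⊂ m
  obtain ⟨m, ⟨hmH, hcm⟩, hmmin⟩ := Set.Finite.exists_minimalFor id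
    {m | m ∈ H ∧ c ⊂ m} (Set.toFinite _)
    ⟨Set.univ, huniv, Set.ssubset_univ_iff.mpr hcu⟩
  simp only [id_eq] at hmmin
  replace hmmin : ∀ m' ∈ {m | m ∈ H ∧ c ⊂ m}, m' ≤ m → m = m' :=
    fun m' hm' h => le_antisymm (hmmin hm' h) h
  obtain ⟨x, hx⟩ := hc
  obtain ⟨y, hym, hyc⟩ := Set.exists_of_ssubset hcm
  have hxm : x ∈ m := hcm.1 hx
  have hxy : x ≠ y := fun h => hyc (h ▸ hx)
  -- maximal a ∈ H with x ∈ a ⊆ c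
  obtain ⟨a, ⟨haH, hxa, hac⟩, hamax⟩ := Set.Finite.exists_maximalFor id
    {a | a ∈ H ∧ x ∈ a ∧ a ⊆ c} (Set.toFinite _)
    ⟨{x}, hsingle x, rfl, Set.singleton_subset_iff.mpr hx⟩
  simp only [id_eq] at hamax
  replace hamax : ∀ a' ∈ {a | a ∈ H ∧ x ∈ a ∧ a ⊆ c}, a ≤ a' → a = a' :=
    fun a' ha' h => le_antisymm h (hamax ha' h)
  -- maximal b ∈ H with y ∈ b ⊂ m
  obtain ⟨b, ⟨hbH, hyb, hbm⟩, hbmax⟩ := Set.Finite.exists_maximalFor id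
    {b | b ∈ H ∧ y ∈ b ∧ b ⊂ m} (Set.toFinite _)
    ⟨{y}, hsingle y, rfl, (Set.ssubset_iff_of_subset (Set.singleton_subset_iff.mpr hym)).mpr
      ⟨x, hxm, fun h => hxy (Set.mem_singleton_iff.mp h)⟩⟩
  simp only [id_eq] at hbmax
  replace hbmax : ∀ b' ∈ {b | b ∈ H ∧ y ∈ b ∧ b ⊂ m}, b ≤ b' → b = b' :=
    fun b' hb' h => le_antisymm h (hbmax hb' h)
  -- b ∩ c = ∅
  have hbc : b ∩ c = ∅ := by
    rcases hcomp b hbH with h | h | h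
    · -- c ⊆ b
      have hcb : c ⊂ b := ssubset_of_subset_of_ne h (fun h' => hcH (h' ▸ hbH))
      exact absurd (hmmin b ⟨hbH, hcb⟩ hbm.1) (fun h' => hbm.2 (h' ▸ subset_rfl))
    · exact absurd (h hyb) hyc
    · rw [Set.inter_comm]; exact h
  -- main compatibility claim
  have hcompat : ∀ e ∈ H, Compatible (a ∪ b) e := by
    intro e he
    have hce := hcomp e he
    have hae := hpc a haH e he
    have hbe := hpc b hbH e he
    have hme := hpc e he m hmH
    rcases hbe with hbe | hbe | hbe
    · -- b ⊆ e
      rcases hme with h1 | h1 | h1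
      · -- e ⊆ m
        by_cases hem : e = m
        · subst hem
          exact Or.inl (Set.union_subset (hac.trans hcm.1) hbm.1)
        · have : b = e := hbmax e ⟨he, hbe hyb, ssubset_of_subset_of_ne h1 hem⟩ hbe
          exact Or.inr (Or.inl (this ▸ Set.subset_union_right))
      · exact Or.inl (Set.union_subset (hac.trans (hcm.1.trans h1)) (hbm.1.trans h1))
      · exact absurd h1 (Set.nonempty_iff_ne_empty.mp ⟨y, hbe hyb, hym⟩)
    · exact Or.inr (Or.inl (hbe.trans Set.subset_union_right))
    · -- e ∩ b = ∅
      rcases hae with hae | hae | hae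
      · -- a ⊆ e
        rcases hce with h3 | h3 | h3
        · -- c ⊆ e
          rcases hme with h4 | h4 | h4
          · -- e ⊆ m
            have hce' : c ⊂ e := ssubset_of_subset_of_ne h3 (fun h' => hcH (h' ▸ he))
            have hme' : m = e := hmmin e ⟨he, hce'⟩ h4
            exact absurd hbe (Set.nonempty_iff_ne_empty.mp ⟨y, hyb, by rw [← hme']; exact hym⟩)
          · exact Or.inl (Set.union_subset (hac.trans (hcm.1.trans h4)) (hbm.1.trans h4))
          · exact absurd h4 (Set.nonempty_iff_ne_empty.mp ⟨x, hae hxa, hxm⟩)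
        · have : a = e := hamax e ⟨he, hae hxa, h3⟩ hae
          exact Or.inr (Or.inl (this ▸ Set.subset_union_left))
        · exact absurd h3 (Set.nonempty_iff_ne_empty.mp ⟨x, hx, hae hxa⟩)
      · exact Or.inr (Or.inl (hae.trans Set.subset_union_left))
      · refine Or.inr (Or.inr ?_)
        rw [Set.eq_empty_iff_forall_notMem]
        rintro z ⟨hz1 | hz1, hz2⟩
        · exact absurd hae (Set.nonempty_iff_ne_empty.mp ⟨z, hz1, hz2⟩)
        · exact absurd hbe (Set.nonempty_iff_ne_empty.mp ⟨z, hz1, hz2⟩)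
  refine ⟨insert (a ∪ b) H, ⟨?_, ?_, Set.mem_insert_of_mem _ huniv,
      fun z => Set.mem_insert_of_mem _ (hsingle z)⟩, Set.subset_insert _ _,
      a ∪ b, Set.mem_insert _ _, ?_⟩
  · rintro e (rfl | he)
    · exact ⟨x, Or.inl hxa⟩
    · exact hne e he
  · rintro e₁ (rfl | h1) e₂ (rfl | h2)
    · exact Or.inl subset_rfl
    · exact hcompat e₂ h2
    · exact compatible_symm (hcompat e₁ h1)
    · exact hpc e₁ h1 e₂ h2
  · -- ¬ Compatible c (a ∪ b)
    rintro (h | h | h)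
    · have hca : c ⊆ a := by
        intro z hz
        rcases h hz with hz' | hz'
        · exact hz'
        · exact absurd hbc (Set.nonempty_iff_ne_empty.mp ⟨z, hz', hz⟩)
      exact hcH ((hca.antisymm hac) ▸ haH)
    · exact hyc (h (Or.inr hyb))
    · exact absurd h (Set.nonempty_iff_ne_empty.mp ⟨x, hx, Or.inl hxa⟩)

/-- The strict consensus of a profile: all clusters present in every tree. -/
def strictCons {X : Type*} {k : ℕ} (P : Fin k → Set (Set X)) : Set (Set X) :=
  {c | ∀ i, c ∈ P i}

/-- The majority-rule consensus `MR_p`: all clusters present in at least `p·k`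
of the input trees. -/
def majCons {X : Type*} (p : ℝ) {k : ℕ} (P : Fin k → Set (Set X)) : Set (Set X) :=
  {c | p * (k : ℝ) ≤ (({i : Fin k | c ∈ P i}).ncard : ℝ)}

/-- The loose consensus: all clusters present in at least one input tree and
compatible with every cluster of every input tree. -/
def looseCons {X : Type*} {k : ℕ} (P : Fin k → Set (Set X)) : Set (Set X) :=
  {c | (∃ i, c ∈ P i) ∧ ∀ j, ∀ c' ∈ P j, Compatible c c'}

/-- If `φ` is a refinement-stable and non-contradictory consensus method,
then every cluster of the output `φ(P)` is already present in some input
hierarchy. -/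
theorem output_clusters_present_in_input
    {X : Type*} [Fintype X] [Nonempty X] {k : ℕ} (hk : 1 ≤ k)
    (φ : (Fin k → Set (Set X)) → Set (Set X))
    (hmap : ∀ P : Fin k → Set (Set X),
      (∀ i, IsHierarchy (P i)) → IsHierarchy (φ P))
    (hstab : ∀ P P' : Fin k → Set (Set X),
      (∀ i, IsHierarchy (P i)) → (∀ i, IsHierarchy (P' i)) →
      (∀ i, P i ⊆ P' i) → φ P ⊆ φ P')
    (hnc : ∀ P : Fin k → Set (Set X), (∀ i, IsHierarchy (P i)) →
      ∀ c ∈ φ P, ∃ i, ∀ c' ∈ P i, Compatible c c')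
    (P : Fin k → Set (Set X)) (hP : ∀ i, IsHierarchy (P i)) :
    ∀ c ∈ φ P, ∃ i, c ∈ P i := by
  intro c hcphi
  by_contra hcon
  push_neg at hcon
  have hcne : c.Nonempty := (hmap P hP).1 c hcphi
  have key' : ∀ i, ∃ H', IsHierarchy H' ∧ P i ⊆ H' ∧ ∃ d ∈ H', ¬ Compatible c d :=
    fun i => key_refine (hP i) hcne (hcon i)
  choose P' hP' hsub hd using key'
  obtain ⟨i, hi⟩ := hnc P' hP' c (hstab P P' hP hP' hsub hcphi)
  obtain ⟨d, hdP', hdnc⟩ := hd i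
  exact hdnc (hi d hdP')
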